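/- The number of monic squarefree self-conjugate polynomials of degree n over F_{q^2} with nonzero constant term equals (q+1)·[q^{n+1} - q^n + (-1)^{n+1}(-1)^{⌊n/2⌋}(q - (-1)^n)]/(q^2 + 1). -/

import Mathlib

set_option linter.unusedSectionVars false

open Polynomial

namespace RSSU

variable {F : Type*} [Field F] [Fintype F]

/-- The conjugation operation on polynomials. -/
noncomputable def conj (σ : F →+* F) (p : F[X]) : F[X] :=
  Polynomial.C (σ (p.coeff 0))⁻¹ * (p.reverse.map σ)

/-- Self-conjugate monic polynomials of degree `n` with nonzero constant term. -/
def SC (σ : F →+* F) (n : ℕ) : Set F[X] :=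
  {p | p.Monic ∧ p.natDegree = n ∧ p.coeff 0 ≠ 0 ∧ conj σ p = p}

/-- Squarefree self-conjugate monic polynomials. -/
def SF (σ : F →+* F) (n : ℕ) : Set F[X] :=
  {p | p.Monic ∧ Squarefree p ∧ p.natDegree = n ∧ p.coeff 0 ≠ 0 ∧ conj σ p = p}

/-- Model set via coefficient conditions. -/
def Pset (q : ℕ) (n : ℕ) : Set F[X] :=
  {p | p.Monic ∧ p.natDegree = n ∧ ∀ j ≤ n, p.coeff (n - j) = p.coeff 0 * (p.coeff j) ^ q}

/-- Build a polynomial from a coefficient function. -/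
noncomputable def mk (n : ℕ) (c : ℕ → F) : F[X] :=
  ∑ i ∈ Finset.range (n + 1), Polynomial.C (c i) * Polynomial.X ^ i

lemma coeff_mk (n : ℕ) (c : ℕ → F) (j : ℕ) :
    (mk n c).coeff j = if j ≤ n then c j else 0 := by
  rw [mk, Polynomial.finset_sum_coeff]
  simp only [coeff_C_mul, coeff_X_pow, mul_ite, mul_one, mul_zero]
  rw [Finset.sum_ite_eq]
  simp [Nat.lt_succ_iff]

lemma natDegree_mk_le (n : ℕ) (c : ℕ → F) : (mk n c).natDegree ≤ n := by
  rw [Polynomial.natDegree_le_iff_coeff_eq_zero]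
  intro m hm
  rw [coeff_mk, if_neg (by omega)]

lemma monic_mk {n : ℕ} {c : ℕ → F} (h : c n = 1) : (mk n c).Monic := by
  have h1 : (mk n c).coeff n = 1 := by rw [coeff_mk, if_pos le_rfl, h]
  exact Polynomial.monic_of_natDegree_le_of_coeff_eq_one n (natDegree_mk_le n c) h1

lemma natDegree_mk {n : ℕ} {c : ℕ → F} (h : c n = 1) : (mk n c).natDegree = n := by
  refine le_antisymm (natDegree_mk_le n c) (Polynomial.le_natDegree_of_ne_zero ?_)
  rw [coeff_mk, if_pos le_rfl, h]
  exact one_ne_zero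

lemma eq_mk_coeff {n : ℕ} {p : F[X]} (hd : p.natDegree = n) : p = mk n p.coeff := by
  ext j
  rw [coeff_mk]
  split
  · rfl
  · exact Polynomial.coeff_eq_zero_of_natDegree_lt (by omega)

lemma mk_mem_Pset {q n : ℕ} {c : ℕ → F} (h1 : c n = 1)
    (hE : ∀ j ≤ n, c (n - j) = c 0 * (c j) ^ q) : mk n c ∈ Pset q n := by
  refine ⟨monic_mk h1, natDegree_mk h1, fun j hj => ?_⟩
  rw [coeff_mk, coeff_mk, coeff_mk, if_pos (Nat.sub_le n j), if_pos (Nat.zero_le n),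
    if_pos hj]
  exact hE j hj

section counts

variable (q : ℕ) (hF : Fintype.card F = q ^ 2)

/-- existence of primitive roots of unity -/
lemma exists_prim {m : ℕ} (hm : 0 < m) (hdvd : m ∣ Fintype.card F - 1) :
    ∃ ζ : F, IsPrimitiveRoot ζ m := by
  classical
  obtain ⟨g, hg⟩ := IsCyclic.exists_generator (α := Fˣ)
  have hord : orderOf g = Fintype.card F - 1 := by
    rw [orderOf_eq_card_of_forall_mem_zpowers hg, Nat.card_eq_fintype_card, Fintype.card_units]
  have hN : 0 < Fintype.card F - 1 := by
    have := Fintype.one_lt_card (α := F)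
    omega
  set N := Fintype.card F - 1 with hNdef
  have hdd : N / m ∣ N := Nat.div_dvd_of_dvd hdvd
  have horder : orderOf (g ^ (N / m)) = m := by
    rw [orderOf_pow, hord, Nat.gcd_eq_right hdd, Nat.div_div_self hdvd hN.ne']
  have hprim : IsPrimitiveRoot (g ^ (N / m)) m := by
    have := IsPrimitiveRoot.orderOf (g ^ (N / m))
    rwa [horder] at this
  exact ⟨((g ^ (N / m) : Fˣ) : F), IsPrimitiveRoot.coe_units_iff.mpr hprim⟩

lemma ncard_pow_eq {m : ℕ} (hm : 0 < m) (hdvd : m ∣ Fintype.card F - 1) {b : F}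
    (hb : b ≠ 0) (hex : ∃ y : F, y ^ m = b) : {x : F | x ^ m = b}.ncard = m := by
  classical
  obtain ⟨ζ, hζ⟩ := exists_prim hm hdvd
  have hset : {x : F | x ^ m = b} = ((Polynomial.nthRoots m b).toFinset : Set F) := by
    ext x
    simp [Polynomial.mem_nthRoots hm]
  rw [hset, Set.ncard_coe_finset]
  rw [Multiset.toFinset_card_of_nodup (hζ.nthRoots_nodup hb)]
  rw [hζ.card_nthRoots, if_pos hex]


section charn

variable {q : ℕ} {σ : F →+* F}

lemma ffrob (hq : Fintype.card F = q ^ 2) (x : F) : (x ^ q) ^ q = x := by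
  have h := FiniteField.pow_card x
  rw [hq, pow_two, pow_mul] at h
  exact h

lemma SC_eq_Pset (hq : Fintype.card F = q ^ 2) (hσ : ∀ x : F, σ x = x ^ q) (n : ℕ) :
    SC σ n = (Pset q n : Set F[X]) := by
  ext p
  constructor
  · rintro ⟨hm, hd, h0, hc⟩
    refine ⟨hm, hd, ?_⟩
    have hσ0 : σ (p.coeff 0) ≠ 0 := fun h => h0 (σ.injective (by rw [h, map_zero]))
    have hcf : ∀ j ≤ n, (p.coeff (n - j)) ^ q = (p.coeff 0) ^ q * p.coeff j := by
      intro j hj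
      have h1 : (conj σ p).coeff j = p.coeff j := by rw [hc]
      rw [conj, Polynomial.coeff_C_mul, Polynomial.coeff_map, Polynomial.coeff_reverse,
        hd, Polynomial.revAt_le hj] at h1
      rw [inv_mul_eq_iff_eq_mul₀ hσ0] at h1
      rw [hσ, hσ] at h1
      rw [h1]
    have hcn : p.coeff n = 1 := by rw [← hd]; exact hm.coeff_natDegree
    intro j hj
    have h1 := hcf j hj
    calc p.coeff (n - j) = ((p.coeff (n - j)) ^ q) ^ q := (ffrob hq _).symm
      _ = ((p.coeff 0) ^ q * p.coeff j) ^ q := by rw [h1]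
      _ = ((p.coeff 0) ^ q) ^ q * (p.coeff j) ^ q := mul_pow _ _ _
      _ = p.coeff 0 * (p.coeff j) ^ q := by rw [ffrob hq]
  · rintro ⟨hm, hd, hE⟩
    have hcn : p.coeff n = 1 := by rw [← hd]; exact hm.coeff_natDegree
    have c0q : p.coeff 0 * (p.coeff 0) ^ q = 1 := by
      have h := hE 0 (Nat.zero_le n)
      rw [Nat.sub_zero, hcn] at h
      exact h.symm
    have h0 : p.coeff 0 ≠ 0 := by
      intro h
      rw [h, zero_mul] at c0q
      exact zero_ne_one c0q
    have hq0 : (p.coeff 0 : F) ^ q ≠ 0 := pow_ne_zero _ h0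
    refine ⟨hm, hd, h0, ?_⟩
    ext j
    rw [conj, Polynomial.coeff_C_mul, Polynomial.coeff_map, Polynomial.coeff_reverse, hd, hσ]
    by_cases hj : j ≤ n
    · rw [Polynomial.revAt_le hj, hσ, hE j hj, mul_pow, ← pow_mul, mul_comm q q, pow_mul,
        ffrob hq, inv_mul_cancel_left₀ hq0]
    · have hqne : q ≠ 0 := by
        intro hq'
        subst hq'
        have := Fintype.one_lt_card (α := F)
        simp at hq
      rw [Polynomial.revAt_eq_self_of_lt (by omega), hσ,
        Polynomial.coeff_eq_zero_of_natDegree_lt (by omega : p.natDegree < j),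
        zero_pow hqne, mul_zero]

end charn

end counts

section cardinality

variable {q : ℕ}

lemma two_le_q (hq : Fintype.card F = q ^ 2) : 2 ≤ q := by
  by_contra h
  have h1 : q ≤ 1 := by omega
  have h2 : q ^ 2 ≤ 1 ^ 2 := Nat.pow_le_pow_left h1 2
  have := Fintype.one_lt_card (α := F)
  omega

lemma q_mul_fact (hq : Fintype.card F = q ^ 2) : (q + 1) * (q - 1) = q ^ 2 - 1 := by
  have h2 := two_le_q hq
  obtain ⟨k, rfl⟩ : ∃ k, q = k + 2 := ⟨q - 2, by omega⟩
  have h3 : (k + 2) ^ 2 = (k + 3) * (k + 1) + 1 := by ring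
  rw [show k + 2 + 1 = k + 3 from rfl, show k + 2 - 1 = k + 1 by omega, h3]
  omega

lemma card_roots_unity (hq : Fintype.card F = q ^ 2) :
    {x : F | x ^ (q + 1) = 1}.ncard = q + 1 := by
  have h2 := two_le_q hq
  refine ncard_pow_eq (by omega) ?_ one_ne_zero ⟨1, one_pow _⟩
  rw [hq]
  exact ⟨q - 1, (q_mul_fact hq).symm⟩

lemma pow_card_units (hq : Fintype.card F = q ^ 2) (g : Fˣ)
    (hg : ∀ x : Fˣ, x ∈ Subgroup.zpowers g) : orderOf g = q ^ 2 - 1 := by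
  classical
  rw [orderOf_eq_card_of_forall_mem_zpowers hg, Nat.card_eq_fintype_card,
    Fintype.card_units, hq]

lemma exists_y (hq : Fintype.card F = q ^ 2) (a : F) (ha : a ^ (q + 1) = 1) :
    ∃ y : F, y ≠ 0 ∧ y = a * y ^ q := by
  classical
  have h2 := two_le_q hq
  have ha0 : a ≠ 0 := by
    intro h
    rw [h, zero_pow (by omega : q + 1 ≠ 0)] at ha
    exact zero_ne_one ha
  set u : Fˣ := Units.mk0 a ha0 with hu_def
  have hu : u ^ (q + 1) = 1 := by
    ext
    rw [Units.val_pow_eq_pow_val, Units.val_one]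
    exact ha
  obtain ⟨g, hg⟩ := IsCyclic.exists_generator (α := Fˣ)
  have hord := pow_card_units hq g hg
  obtain ⟨k, hk⟩ : ∃ k : ℕ, g ^ k = u⁻¹ := by
    have hmem : u⁻¹ ∈ Subgroup.zpowers g := hg _
    have hfin : IsOfFinOrder g := isOfFinOrder_of_finite g
    rw [← hfin.mem_powers_iff_mem_zpowers] at hmem
    exact (Submonoid.mem_powers_iff _ _).mp hmem
  have hdvd : (q - 1) ∣ k := by
    have h1 : g ^ (k * (q + 1)) = 1 := by
      rw [pow_mul, hk, inv_pow, hu, inv_one]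
    have h2' : orderOf g ∣ k * (q + 1) := orderOf_dvd_of_pow_eq_one h1
    rw [hord, ← q_mul_fact hq] at h2'
    have h3 : (q - 1) * (q + 1) ∣ k * (q + 1) := by
      rw [mul_comm (q - 1) (q + 1)]
      exact h2'
    exact (Nat.mul_dvd_mul_iff_right (by omega : 0 < q + 1)).mp h3
  set yu : Fˣ := g ^ (k / (q - 1)) with hyu_def
  have hypow : yu ^ (q - 1) = u⁻¹ := by
    rw [hyu_def, ← pow_mul, Nat.div_mul_cancel hdvd, hk]
  refine ⟨(yu : F), Units.ne_zero yu, ?_⟩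
  have hyF : (yu : F) ^ (q - 1) = a⁻¹ := by
    rw [← Units.val_pow_eq_pow_val, hypow, hu_def]
    simp
  have hq1 : q = (q - 1) + 1 := by omega
  calc (yu : F) = a * a⁻¹ * (yu : F) := by rw [mul_inv_cancel₀ ha0, one_mul]
    _ = a * ((yu : F) ^ (q - 1) * (yu : F)) := by rw [hyF]; ring
    _ = a * (yu : F) ^ q := by rw [← pow_succ, ← hq1]

lemma card_zq (hq : Fintype.card F = q ^ 2) : {z : F | z = z ^ q}.ncard = q := by
  have h2 := two_le_q hq
  have hset : {z : F | z = z ^ q} = insert (0 : F) {x : F | x ^ (q - 1) = 1} := by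
    ext z
    simp only [Set.mem_setOf_eq, Set.mem_insert_iff]
    constructor
    · intro h
      by_cases hz : z = 0
      · exact Or.inl hz
      · right
        have hq1 : q = (q - 1) + 1 := by omega
        rw [hq1, pow_succ] at h
        have := mul_right_cancel₀ hz (h.symm.trans (one_mul z).symm)
        exact this
    · rintro (rfl | h)
      · rw [zero_pow (by omega : q ≠ 0)]
      · have hq1 : q = (q - 1) + 1 := by omega
        rw [hq1, pow_succ, h, one_mul]
  rw [hset, Set.ncard_insert_of_notMem]
  · have : {x : F | x ^ (q - 1) = 1}.ncard = q - 1 := by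
      refine ncard_pow_eq (by omega) ?_ one_ne_zero ⟨1, one_pow _⟩
      rw [hq]
      exact ⟨q + 1, by rw [← q_mul_fact hq]; ring⟩
    omega
  · intro h
    simp only [Set.mem_setOf_eq] at h
    rw [zero_pow (by omega : q - 1 ≠ 0)] at h
    exact zero_ne_one h

section equivs

variable (hq : Fintype.card F = q ^ 2)

lemma Pset_coeff_top {N : ℕ} {p : F[X]} (h : p ∈ (Pset q N : Set F[X])) : p.coeff N = 1 := by
  obtain ⟨hm, hd, _⟩ := h
  rw [← hd]
  exact hm.coeff_natDegree

lemma Pset_c0_mul {N : ℕ} {p : F[X]} (h : p ∈ (Pset q N : Set F[X])) :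
    p.coeff 0 * (p.coeff 0) ^ q = 1 := by
  obtain ⟨hm, hd, hE⟩ := h
  have h0 := hE 0 (Nat.zero_le N)
  rw [Nat.sub_zero, Pset_coeff_top ⟨hm, hd, hE⟩] at h0
  exact h0.symm

lemma Pset_c0_ne {N : ℕ} {p : F[X]} (h : p ∈ (Pset q N : Set F[X])) : p.coeff 0 ≠ 0 := by
  intro h0
  have := Pset_c0_mul h
  rw [h0, zero_mul] at this
  exact zero_ne_one this

lemma Pset_c0_pow {N : ℕ} {p : F[X]} (h : p ∈ (Pset q N : Set F[X])) :
    (p.coeff 0) ^ (q + 1) = 1 := by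
  rw [pow_succ', Pset_c0_mul h]

/-- degree-1 case -/
noncomputable def equiv1 : (Pset q 1 : Set F[X]) ≃ {x : F // x ^ (q + 1) = 1} where
  toFun p := ⟨(p : F[X]).coeff 0, Pset_c0_pow p.2⟩
  invFun a := ⟨mk 1 (fun j => if j = 0 then a.1 else 1), by
    have ha2 : (1 : F) = a.1 * a.1 ^ q := by
      have h := a.2
      rw [pow_succ'] at h
      exact h.symm
    refine mk_mem_Pset (by norm_num) ?_
    intro j hj
    interval_cases j
    · simpa using ha2
    · simp⟩
  left_inv p := by
    apply Subtype.ext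
    dsimp only
    apply Polynomial.ext
    intro j
    rw [coeff_mk]
    by_cases hj : j ≤ 1
    · interval_cases j
      · simp
      · simp only [if_pos le_rfl, if_neg one_ne_zero]
        exact (Pset_coeff_top p.2).symm
    · rw [if_neg hj]
      exact (Polynomial.coeff_eq_zero_of_natDegree_lt (by rw [p.2.2.1]; omega)).symm
  right_inv a := by
    apply Subtype.ext
    show (mk 1 (fun j => if j = 0 then a.1 else 1) : F[X]).coeff 0 = a.1
    rw [coeff_mk]
    norm_num

/-- choice of a basepoint solution of `y = a * y ^ q`. -/
noncomputable def ych (q : ℕ) (a : F) : F :=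
  letI := Classical.propDecidable (∃ y : F, y ≠ 0 ∧ y = a * y ^ q)
  if h : ∃ y : F, y ≠ 0 ∧ y = a * y ^ q then h.choose else 1

lemma ych_spec (hq : Fintype.card F = q ^ 2) {a : F} (ha : a ^ (q + 1) = 1) :
    ych q a ≠ 0 ∧ ych q a = a * (ych q a) ^ q := by
  have h := exists_y hq a ha
  rw [ych]
  simp only [dif_pos h]
  exact h.choose_spec

/-- degree-2 case -/
noncomputable def equiv2 : (Pset q 2 : Set F[X]) ≃
    ({x : F // x ^ (q + 1) = 1} × {z : F // z = z ^ q}) where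
  toFun p := by
    refine ⟨⟨(p : F[X]).coeff 0, Pset_c0_pow p.2⟩,
      ⟨(p : F[X]).coeff 1 * (ych q ((p : F[X]).coeff 0))⁻¹, ?_⟩⟩
    obtain ⟨hy0, hy⟩ := ych_spec hq (Pset_c0_pow p.2)
    have hc0 : (p : F[X]).coeff 0 ≠ 0 := Pset_c0_ne p.2
    have h1 : (p : F[X]).coeff 1 = (p : F[X]).coeff 0 * ((p : F[X]).coeff 1) ^ q :=
      p.2.2.2 1 (by norm_num)
    set c0 := (p : F[X]).coeff 0
    set c1 := (p : F[X]).coeff 1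
    set y := ych q c0
    rw [mul_pow, inv_pow]
    calc c1 * y⁻¹ = (c0 * c1 ^ q) * (c0 * y ^ q)⁻¹ := by rw [← h1, ← hy]
      _ = c1 ^ q * (y ^ q)⁻¹ := by
          rw [mul_inv, show (c0 * c1 ^ q) * (c0⁻¹ * (y ^ q)⁻¹)
            = (c0 * c0⁻¹) * (c1 ^ q * (y ^ q)⁻¹) by ring, mul_inv_cancel₀ hc0, one_mul]
  invFun az := ⟨mk 2 (fun j => if j = 0 then az.1.1 else
      if j = 1 then az.2.1 * ych q az.1.1 else 1), by
    obtain ⟨hy0, hy⟩ := ych_spec hq az.1.2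
    refine mk_mem_Pset (by norm_num) ?_
    intro j hj
    have ha2 : az.1.1 * az.1.1 ^ q = 1 := by rw [← pow_succ']; exact az.1.2
    interval_cases j
    · simpa using ha2.symm
    · show (fun j => if j = 0 then az.1.1 else if j = 1 then az.2.1 * ych q az.1.1 else 1) (2 - 1)
        = _
      norm_num
      calc az.2.1 * ych q az.1.1 = az.2.1 ^ q * (az.1.1 * (ych q az.1.1) ^ q) := by
            rw [← hy, ← az.2.2]
        _ = az.1.1 * (az.2.1 * ych q az.1.1) ^ q := by rw [mul_pow]; ring
    · simp⟩
  left_inv p := by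
    apply Subtype.ext
    dsimp only
    obtain ⟨hy0, hy⟩ := ych_spec hq (Pset_c0_pow p.2)
    apply Polynomial.ext
    intro j
    rw [coeff_mk]
    by_cases hj : j ≤ 2
    · interval_cases j
      · simp
      · norm_num
        rw [inv_mul_cancel_right₀ hy0]
      · norm_num
        exact (Pset_coeff_top p.2).symm
    · rw [if_neg hj]
      exact (Polynomial.coeff_eq_zero_of_natDegree_lt (by rw [p.2.2.1]; omega)).symm
  right_inv az := by
    obtain ⟨hy0, hy⟩ := ych_spec hq az.1.2
    have h0 : (mk 2 (fun j => if j = 0 then az.1.1 else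
        if j = 1 then az.2.1 * ych q az.1.1 else 1) : F[X]).coeff 0 = az.1.1 := by
      rw [coeff_mk]
      norm_num
    have h1 : (mk 2 (fun j => if j = 0 then az.1.1 else
        if j = 1 then az.2.1 * ych q az.1.1 else 1) : F[X]).coeff 1 = az.2.1 * ych q az.1.1 := by
      rw [coeff_mk]
      norm_num
    ext
    · dsimp only
      exact h0
    · dsimp only
      rw [h0, h1]
      exact mul_inv_cancel_right₀ hy0 _

/-- lower coefficient data extracted from a degree-`n+3` polynomial -/
def dfun (p : F[X]) (n : ℕ) : ℕ → F :=
  fun j => if j = 0 then p.coeff 0 else if j ≤ n then p.coeff (j + 1) else 1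

lemma dfun_zero (p : F[X]) (n : ℕ) : dfun p n 0 = p.coeff 0 := by simp [dfun]

lemma dfun_mid (p : F[X]) (n : ℕ) {j : ℕ} (h1 : j ≠ 0) (h2 : j ≤ n) :
    dfun p n j = p.coeff (j + 1) := by
  rw [dfun, if_neg h1, if_pos h2]

lemma dfun_top (p : F[X]) (n : ℕ) : dfun p n (n + 1) = 1 := by
  rw [dfun, if_neg (by omega), if_neg (by omega)]

/-- coefficient data for the reconstructed degree-`n+3` polynomial -/
def ufun (r : F[X]) (x : F) (q n : ℕ) : ℕ → F :=
  fun j => if j = 0 then r.coeff 0 else if j = 1 then x else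
    if j ≤ n + 1 then r.coeff (j - 1) else if j = n + 2 then r.coeff 0 * x ^ q else 1

lemma ufun_zero (r : F[X]) (x : F) (q n : ℕ) : ufun r x q n 0 = r.coeff 0 := by simp [ufun]

lemma ufun_one (r : F[X]) (x : F) (q n : ℕ) : ufun r x q n 1 = x := by
  rw [ufun, if_neg (by omega), if_pos rfl]

lemma ufun_mid (r : F[X]) (x : F) (q n : ℕ) {j : ℕ} (h1 : 2 ≤ j) (h2 : j ≤ n + 1) :
    ufun r x q n j = r.coeff (j - 1) := by
  rw [ufun, if_neg (by omega), if_neg (by omega), if_pos h2]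

lemma ufun_n2 (r : F[X]) (x : F) (q n : ℕ) : ufun r x q n (n + 2) = r.coeff 0 * x ^ q := by
  rw [ufun, if_neg (by omega), if_neg (by omega), if_neg (by omega), if_pos rfl]

lemma ufun_top (r : F[X]) (x : F) (q n : ℕ) : ufun r x q n (n + 3) = 1 := by
  rw [ufun, if_neg (by omega), if_neg (by omega), if_neg (by omega), if_neg (by omega)]

lemma dfun_mem {n : ℕ} {p : F[X]} (hp : p ∈ (Pset q (n + 3) : Set F[X])) :
    mk (n + 1) (dfun p n) ∈ (Pset q (n + 1) : Set F[X]) := by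
  obtain ⟨hm, hd, hE⟩ := hp
  refine mk_mem_Pset (dfun_top p n) ?_
  intro j hj
  by_cases hj0 : j = 0
  · subst hj0
    rw [Nat.sub_zero, dfun_top, dfun_zero]
    exact (Pset_c0_mul ⟨hm, hd, hE⟩).symm
  · by_cases hjt : j = n + 1
    · subst hjt
      rw [Nat.sub_self, dfun_zero, dfun_top, one_pow, mul_one]
    · have h1 : 1 ≤ j ∧ j ≤ n := by omega
      rw [dfun_mid p n (by omega) (by omega : n + 1 - j ≤ n),
        dfun_mid p n hj0 h1.2, dfun_zero]
      have h2 := hE (j + 1) (by omega)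
      rw [show n + 3 - (j + 1) = n + 1 - j + 1 by omega] at h2
      exact h2

lemma ufun_mem (hq : Fintype.card F = q ^ 2) {n : ℕ} {r : F[X]} (x : F)
    (hr : r ∈ (Pset q (n + 1) : Set F[X])) :
    mk (n + 3) (ufun r x q n) ∈ (Pset q (n + 3) : Set F[X]) := by
  obtain ⟨hm, hd, hE⟩ := hr
  have hc0 := Pset_c0_mul ⟨hm, hd, hE⟩
  refine mk_mem_Pset (ufun_top r x q n) ?_
  intro j hj
  by_cases hj0 : j = 0
  · subst hj0
    rw [Nat.sub_zero, ufun_top, ufun_zero]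
    exact hc0.symm
  · by_cases hj1 : j = 1
    · subst hj1
      rw [show n + 3 - 1 = n + 2 by omega, ufun_n2, ufun_zero, ufun_one]
    · by_cases hjm : j ≤ n + 1
      · have hi1 : 2 ≤ n + 3 - j := by omega
        have hi2 : n + 3 - j ≤ n + 1 := by omega
        rw [ufun_mid r x q n hi1 hi2, ufun_mid r x q n (by omega) hjm, ufun_zero,
          show n + 3 - j - 1 = n + 1 - (j - 1) by omega]
        exact hE (j - 1) (by omega)
      · by_cases hj2 : j = n + 2
        · subst hj2
          rw [show n + 3 - (n + 2) = 1 by omega, ufun_one, ufun_n2, ufun_zero, mul_pow,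
            ← pow_mul, mul_comm q q, pow_mul, ffrob hq]
          calc x = 1 * x := (one_mul x).symm
            _ = r.coeff 0 * (r.coeff 0 ^ q * x) := by rw [← hc0]; ring
        · have : j = n + 3 := by omega
          subst this
          rw [Nat.sub_self, ufun_zero, ufun_top, one_pow, mul_one]

/-- inductive step equivalence -/
noncomputable def equiv3 (hq : Fintype.card F = q ^ 2) (n : ℕ) :
    (Pset q (n + 3) : Set F[X]) ≃ ((Pset q (n + 1) : Set F[X]) × F) where
  toFun p := (⟨mk (n + 1) (dfun (↑p) n), dfun_mem p.2⟩, (↑p : F[X]).coeff 1)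
  invFun rx := ⟨mk (n + 3) (ufun (↑rx.1) rx.2 q n), ufun_mem hq rx.2 rx.1.2⟩
  left_inv p := by
    apply Subtype.ext
    dsimp only
    obtain ⟨hm, hd, hE⟩ := p.2
    apply Polynomial.ext
    intro j
    rw [coeff_mk]
    by_cases hj : j ≤ n + 3
    · rw [if_pos hj]
      by_cases hj0 : j = 0
      · subst hj0
        rw [ufun_zero, coeff_mk, if_pos (by omega : 0 ≤ n + 1), dfun_zero]
      · by_cases hj1 : j = 1
        · subst hj1
          rw [ufun_one]
        · by_cases hjm : j ≤ n + 1
          · rw [ufun_mid _ _ _ _ (by omega) hjm, coeff_mk, if_pos (by omega : j - 1 ≤ n + 1),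
              dfun_mid _ _ (by omega) (by omega), show j - 1 + 1 = j by omega]
          · by_cases hj2 : j = n + 2
            · subst hj2
              rw [ufun_n2, coeff_mk, if_pos (by omega : 0 ≤ n + 1), dfun_zero]
              have h2 := hE 1 (by omega)
              rw [show n + 3 - 1 = n + 2 by omega] at h2
              exact h2.symm
            · have : j = n + 3 := by omega
              subst this
              rw [ufun_top]
              exact (Pset_coeff_top ⟨hm, hd, hE⟩).symm
    · rw [if_neg hj]
      exact (Polynomial.coeff_eq_zero_of_natDegree_lt (by rw [hd]; omega)).symm
  right_inv rx := by
    obtain ⟨hm, hd, hE⟩ := rx.1.2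
    have hc1 : (mk (n + 3) (ufun (↑rx.1) rx.2 q n) : F[X]).coeff 1 = rx.2 := by
      rw [coeff_mk, if_pos (by omega : 1 ≤ n + 3), ufun_one]
    refine Prod.ext ?_ ?_
    · apply Subtype.ext
      dsimp only
      apply Polynomial.ext
      intro j
      rw [coeff_mk]
      by_cases hj : j ≤ n + 1
      · rw [if_pos hj]
        by_cases hj0 : j = 0
        · subst hj0
          rw [dfun_zero, coeff_mk, if_pos (by omega : 0 ≤ n + 3), ufun_zero]
        · by_cases hjt : j = n + 1
          · subst hjt
            rw [dfun_top]
            exact (Pset_coeff_top ⟨hm, hd, hE⟩).symm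
          · rw [dfun_mid _ _ hj0 (by omega), coeff_mk, if_pos (by omega : j + 1 ≤ n + 3),
              ufun_mid _ _ _ _ (by omega) (by omega), show j + 1 - 1 = j by omega]
      · rw [if_neg hj]
        exact (Polynomial.coeff_eq_zero_of_natDegree_lt (by rw [hd]; omega)).symm
    · dsimp only
      exact hc1

end equivs

lemma card_Pset (hq : Fintype.card F = q ^ 2) :
    ∀ n : ℕ, Nat.card (Pset q (n + 1) : Set F[X]) = (q + 1) * q ^ n := by
  intro n
  induction n using Nat.twoStepInduction with
  | zero =>
    rw [Nat.card_congr (equiv1 (q := q) (F := F)), pow_zero, mul_one]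
    have h : Nat.card {x : F // x ^ (q + 1) = 1} = q + 1 := by
      have h' := Nat.card_coe_set_eq {x : F | x ^ (q + 1) = 1}
      rw [card_roots_unity hq] at h'
      exact h'
    exact h
  | one =>
    rw [Nat.card_congr (equiv2 (q := q) (F := F) hq), Nat.card_prod]
    have h1 : Nat.card {x : F // x ^ (q + 1) = 1} = q + 1 := by
      have h' := Nat.card_coe_set_eq {x : F | x ^ (q + 1) = 1}
      rw [card_roots_unity hq] at h'
      exact h'
    have h2 : Nat.card {z : F // z = z ^ q} = q := by
      have h' := Nat.card_coe_set_eq {z : F | z = z ^ q}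
      rw [card_zq hq] at h'
      exact h'
    rw [h1, h2, pow_one]
  | more n ih _ =>
    rw [Nat.card_congr (equiv3 hq n), Nat.card_prod, ih]
    have hF : Nat.card F = q ^ 2 := by rw [Nat.card_eq_fintype_card, hq]
    rw [hF, pow_add]
    ring

lemma card_SC {σ : F →+* F} (hq : Fintype.card F = q ^ 2) (hσ : ∀ x : F, σ x = x ^ q) (n : ℕ) :
    Nat.card (SC σ (n + 1) : Set F[X]) = (q + 1) * q ^ n := by
  rw [SC_eq_Pset hq hσ]
  exact card_Pset hq n

end cardinality

section finiteness

lemma finite_of_deg_le (n : ℕ) (S : Set F[X]) (h : ∀ p ∈ S, p.natDegree ≤ n) : S.Finite := by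
  apply Set.Finite.of_finite_image (f := fun p => fun i : Fin (n + 1) => p.coeff i)
  · exact Set.toFinite _
  · intro p hp r hr hpr
    apply Polynomial.ext
    intro j
    by_cases hj : j ≤ n
    · have := congrFun hpr ⟨j, by omega⟩
      simpa using this
    · rw [Polynomial.coeff_eq_zero_of_natDegree_lt (by have := h p hp; omega),
        Polynomial.coeff_eq_zero_of_natDegree_lt (by have := h r hr; omega)]

lemma finite_SC (σ : F →+* F) (n : ℕ) : (SC σ n).Finite :=
  finite_of_deg_le n _ (fun p hp => le_of_eq hp.2.1)

lemma finite_SF (σ : F →+* F) (n : ℕ) : (SF σ n).Finite :=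
  finite_of_deg_le n _ (fun p hp => le_of_eq hp.2.2.1)

end finiteness

section conjugation

variable {σ : F →+* F}

lemma conj_mul (p r : F[X]) : conj σ (p * r) = conj σ p * conj σ r := by
  rw [conj, conj, conj, Polynomial.mul_coeff_zero, map_mul, mul_inv, Polynomial.C_mul,
    Polynomial.reverse_mul_of_domain, Polynomial.map_mul]
  ring

lemma conj_one : conj σ (1 : F[X]) = 1 := by
  have h1 : (1 : F[X]).reverse = 1 := by
    rw [show (1 : F[X]) = Polynomial.C 1 from (map_one Polynomial.C).symm,
      Polynomial.reverse_C]
  rw [conj, h1, Polynomial.coeff_one_zero, map_one, inv_one, map_one, Polynomial.map_one,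
    mul_one]

lemma ntd_zero {p : F[X]} (h0 : p.coeff 0 ≠ 0) : p.natTrailingDegree = 0 :=
  Nat.le_zero.mp (Polynomial.natTrailingDegree_le_of_ne_zero h0)

lemma natDegree_reverse_eq {p : F[X]} (h0 : p.coeff 0 ≠ 0) :
    p.reverse.natDegree = p.natDegree := by
  rw [Polynomial.reverse_natDegree, ntd_zero h0, Nat.sub_zero]

lemma rev_rev {p : F[X]} (h0 : p.coeff 0 ≠ 0) : p.reverse.reverse = p := by
  apply Polynomial.ext
  intro j
  rw [Polynomial.coeff_reverse, natDegree_reverse_eq h0, Polynomial.coeff_reverse,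
    Polynomial.revAt_invol]

lemma trailing_eq_c0 {p : F[X]} (h0 : p.coeff 0 ≠ 0) : p.trailingCoeff = p.coeff 0 := by
  rw [Polynomial.trailingCoeff, ntd_zero h0]

lemma conj_monic {p : F[X]} (hp : p ≠ 0) (h0 : p.coeff 0 ≠ 0) : (conj σ p).Monic := by
  have hσ0 : σ (p.coeff 0) ≠ 0 := fun h => h0 (σ.injective (by rw [h, map_zero]))
  have hlc : (conj σ p).leadingCoeff = 1 := by
    rw [conj, Polynomial.leadingCoeff_mul, Polynomial.leadingCoeff_C,
      Polynomial.leadingCoeff_map_of_injective σ.injective, Polynomial.reverse_leadingCoeff,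
      trailing_eq_c0 h0, inv_mul_cancel₀ hσ0]
  exact hlc

lemma conj_coeff0 (p : F[X]) :
    (conj σ p).coeff 0 = (σ (p.coeff 0))⁻¹ * σ p.leadingCoeff := by
  rw [conj, Polynomial.coeff_C_mul, Polynomial.coeff_map, Polynomial.coeff_zero_reverse]

lemma conj_coeff0_ne {p : F[X]} (hp : p ≠ 0) (h0 : p.coeff 0 ≠ 0) :
    (conj σ p).coeff 0 ≠ 0 := by
  have hσ0 : σ (p.coeff 0) ≠ 0 := fun h => h0 (σ.injective (by rw [h, map_zero]))
  have hlc : σ p.leadingCoeff ≠ 0 := fun h =>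
    hp (Polynomial.leadingCoeff_eq_zero.mp (σ.injective (by rw [h, map_zero])))
  rw [conj_coeff0]
  exact mul_ne_zero (inv_ne_zero hσ0) hlc

lemma squarefree_reverse {p : F[X]} (h0 : p.coeff 0 ≠ 0) (hsf : Squarefree p) :
    Squarefree p.reverse := by
  intro d hd
  obtain ⟨e, he⟩ := hd
  have hp0 : p ≠ 0 := hsf.ne_zero
  have hd0 : d ≠ 0 := by
    intro h
    rw [h, mul_zero, zero_mul] at he
    exact hp0 (Polynomial.reverse_eq_zero.mp he)
  have hdc0 : d.coeff 0 ≠ 0 := by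
    intro h
    have := congrArg (fun r => Polynomial.coeff r 0) he
    simp only [Polynomial.mul_coeff_zero, Polynomial.coeff_zero_reverse] at this
    rw [h] at this
    simp only [zero_mul, mul_zero] at this
    exact (Polynomial.leadingCoeff_ne_zero.mpr hp0) this
  have hrev : p = d.reverse * d.reverse * e.reverse := by
    conv_lhs => rw [← rev_rev h0]
    rw [he, Polynomial.reverse_mul_of_domain, Polynomial.reverse_mul_of_domain]
  have hu : IsUnit d.reverse := hsf d.reverse ⟨e.reverse, hrev⟩
  have hnd : d.natDegree = 0 := by
    have h1 := Polynomial.natDegree_eq_zero_of_isUnit hu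
    rw [natDegree_reverse_eq hdc0] at h1
    exact h1
  rw [Polynomial.eq_C_of_natDegree_eq_zero hnd]
  exact Polynomial.isUnit_C.mpr (isUnit_iff_ne_zero.mpr hdc0)

lemma squarefree_map {w : F[X]} (hsf : Squarefree w) : Squarefree (w.map σ) := by
  have hbij : Function.Bijective σ := ⟨σ.injective, by
    exact Finite.surjective_of_injective σ.injective⟩
  intro d hd
  obtain ⟨c, rfl⟩ := Polynomial.map_surjective σ hbij.2 d
  obtain ⟨e, he⟩ := hd
  obtain ⟨e', rfl⟩ := Polynomial.map_surjective σ hbij.2 e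
  have hw : w = c * c * e' := by
    apply Polynomial.map_injective σ σ.injective
    rw [he, Polynomial.map_mul, Polynomial.map_mul]
  have hu : IsUnit c := hsf c ⟨e', hw⟩
  have := hu.map (Polynomial.mapRingHom σ)
  simpa using this

lemma conj_squarefree {p : F[X]} (h0 : p.coeff 0 ≠ 0) (hsf : Squarefree p) :
    Squarefree (conj σ p) := by
  have hσ0 : σ (p.coeff 0) ≠ 0 := fun h => h0 (σ.injective (by rw [h, map_zero]))
  have hw : Squarefree ((p.reverse.map σ) : F[X]) :=
    squarefree_map (squarefree_reverse h0 hsf)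
  apply hw.squarefree_of_dvd
  refine ⟨Polynomial.C (σ (p.coeff 0)), ?_⟩
  rw [conj, mul_comm _ (Polynomial.C (σ (p.coeff 0))), ← mul_assoc, ← Polynomial.C_mul,
    mul_inv_cancel₀ hσ0, Polynomial.C_1, one_mul]

end conjugation

section decomposition

open UniqueFactorizationMonoid

lemma decomp_unique {s₁ s₂ g₁ g₂ : F[X]} (hs₁m : s₁.Monic) (hs₂m : s₂.Monic)
    (hg₁m : g₁.Monic) (hg₂m : g₂.Monic) (hsf₁ : Squarefree s₁) (hsf₂ : Squarefree s₂)
    (h : s₁ * g₁ ^ 2 = s₂ * g₂ ^ 2) : s₁ = s₂ ∧ g₁ = g₂ := by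
  classical
  have hs₁0 : s₁ ≠ 0 := hs₁m.ne_zero
  have hs₂0 : s₂ ≠ 0 := hs₂m.ne_zero
  have hg₁0 : g₁ ≠ 0 := hg₁m.ne_zero
  have hg₂0 : g₂ ≠ 0 := hg₂m.ne_zero
  have hnf : normalizedFactors s₁ + (normalizedFactors g₁ + normalizedFactors g₁)
      = normalizedFactors s₂ + (normalizedFactors g₂ + normalizedFactors g₂) := by
    have e1 : normalizedFactors (s₁ * (g₁ * g₁))
        = normalizedFactors s₁ + (normalizedFactors g₁ + normalizedFactors g₁) := by
      rw [normalizedFactors_mul hs₁0 (mul_ne_zero hg₁0 hg₁0),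
        normalizedFactors_mul hg₁0 hg₁0]
    have e2 : normalizedFactors (s₂ * (g₂ * g₂))
        = normalizedFactors s₂ + (normalizedFactors g₂ + normalizedFactors g₂) := by
      rw [normalizedFactors_mul hs₂0 (mul_ne_zero hg₂0 hg₂0),
        normalizedFactors_mul hg₂0 hg₂0]
    rw [← e1, ← e2]
    congr 1
    rw [← pow_two, ← pow_two]
    exact h
  have hnod₁ : (normalizedFactors s₁).Nodup :=
    (squarefree_iff_nodup_normalizedFactors hs₁0).mp hsf₁
  have hnod₂ : (normalizedFactors s₂).Nodup :=
    (squarefree_iff_nodup_normalizedFactors hs₂0).mp hsf₂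
  have hcnt : ∀ π : F[X], Multiset.count π (normalizedFactors g₁)
      = Multiset.count π (normalizedFactors g₂) := by
    intro π
    have h1 := congrArg (Multiset.count π) hnf
    simp only [Multiset.count_add] at h1
    have h2 := Multiset.nodup_iff_count_le_one.mp hnod₁ π
    have h3 := Multiset.nodup_iff_count_le_one.mp hnod₂ π
    omega
  have hnfg : normalizedFactors g₁ = normalizedFactors g₂ := Multiset.ext.mpr hcnt
  have hassoc : Associated g₁ g₂ := by
    have a1 := prod_normalizedFactors hg₁0
    have a2 := prod_normalizedFactors hg₂0
    rw [hnfg] at a1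
    exact a1.symm.trans a2
  have hgg : g₁ = g₂ := Polynomial.eq_of_monic_of_associated hg₁m hg₂m hassoc
  subst hgg
  refine ⟨?_, rfl⟩
  exact mul_right_cancel₀ (pow_ne_zero 2 hg₁0) h

lemma decomp_exists_aux : ∀ N : ℕ, ∀ φ : F[X], φ.natDegree ≤ N → φ.Monic →
    ∃ s g : F[X], s.Monic ∧ g.Monic ∧ Squarefree s ∧ φ = s * g ^ 2 := by
  intro N
  induction N using Nat.strong_induction_on with
  | _ N ih =>
    intro φ hdeg hm
    by_cases hsf : Squarefree φ
    · exact ⟨φ, 1, hm, monic_one, hsf, by ring⟩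
    · rw [Squarefree] at hsf
      push_neg at hsf
      obtain ⟨x, hxd, hxu⟩ := hsf
      have hx0 : x ≠ 0 := by
        intro h
        subst h
        rw [mul_zero, zero_dvd_iff] at hxd
        exact hm.ne_zero hxd
      have hlc0 : x.leadingCoeff ≠ 0 := Polynomial.leadingCoeff_ne_zero.mpr hx0
      set x' : F[X] := x * Polynomial.C x.leadingCoeff⁻¹ with hx'def
      have hx'm : x'.Monic := Polynomial.monic_mul_leadingCoeff_inv hx0
      have hx'u : ¬IsUnit x' := by
        intro hu
        apply hxu
        have : x = x' * Polynomial.C x.leadingCoeff := by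
          rw [hx'def, mul_assoc, ← Polynomial.C_mul, inv_mul_cancel₀ hlc0,
            Polynomial.C_1, mul_one]
        rw [this]
        exact hu.mul (Polynomial.isUnit_C.mpr (isUnit_iff_ne_zero.mpr hlc0))
      have hx'deg : 1 ≤ x'.natDegree := by
        by_contra hdd
        have : x'.natDegree = 0 := by omega
        exact hx'u ((hx'm.natDegree_eq_zero.mp this) ▸ isUnit_one)
      have hC : Polynomial.C x.leadingCoeff⁻¹ * Polynomial.C x.leadingCoeff = 1 := by
        rw [← Polynomial.C_mul, inv_mul_cancel₀ hlc0, Polynomial.C_1]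
      obtain ⟨e, he⟩ := hxd
      have hdvd' : φ = x' * x' * (Polynomial.C x.leadingCoeff ^ 2 * e) := by
        rw [he, hx'def]
        have expand : x * Polynomial.C x.leadingCoeff⁻¹ * (x * Polynomial.C x.leadingCoeff⁻¹)
            * (Polynomial.C x.leadingCoeff ^ 2 * e)
            = (Polynomial.C x.leadingCoeff⁻¹ * Polynomial.C x.leadingCoeff)
              * ((Polynomial.C x.leadingCoeff⁻¹ * Polynomial.C x.leadingCoeff) * (x * x * e)) := by
          ring
        rw [expand, hC, one_mul, one_mul]
      set ψ : F[X] := Polynomial.C x.leadingCoeff ^ 2 * e with hψdef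
      have hψm : ψ.Monic := by
        apply Polynomial.Monic.of_mul_monic_left (hx'm.mul hx'm)
        rw [← hdvd']
        exact hm
      have hφ0 : φ ≠ 0 := hm.ne_zero
      have hdegφ : φ.natDegree = (x'.natDegree + x'.natDegree) + ψ.natDegree := by
        rw [hdvd', (hx'm.mul hx'm).natDegree_mul hψm, hx'm.natDegree_mul hx'm]
      have hψlt : ψ.natDegree < N := by omega
      obtain ⟨s, g, hsm, hgm, hssf, hrec⟩ := ih ψ.natDegree hψlt ψ le_rfl hψm
      refine ⟨s, x' * g, hsm, hx'm.mul hgm, hssf, ?_⟩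
      rw [hdvd', hrec]
      ring

end decomposition

section convolution

variable {σ : F →+* F}

lemma mul_sq_mem {n k : ℕ} (hk : 2 * k ≤ n) {s g : F[X]}
    (hs : s ∈ SF σ (n - 2 * k)) (hg : g ∈ SC σ k) : s * g ^ 2 ∈ SC σ n := by
  obtain ⟨sm, ssf, sdeg, s0, scj⟩ := hs
  obtain ⟨gm, gdeg, g0, gcj⟩ := hg
  refine ⟨?_, ?_, ?_, ?_⟩
  · have h := sm.mul (gm.mul gm)
    rwa [← pow_two] at h
  · rw [pow_two, sm.natDegree_mul (gm.mul gm), gm.natDegree_mul gm, sdeg, gdeg]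
    omega
  · rw [pow_two, Polynomial.mul_coeff_zero, Polynomial.mul_coeff_zero]
    exact mul_ne_zero s0 (mul_ne_zero g0 g0)
  · rw [pow_two, conj_mul, conj_mul, scj, gcj]

lemma decomp_of_SC {n : ℕ} {φ : F[X]} (hφ : φ ∈ SC σ n) :
    ∃ k, 2 * k ≤ n ∧ ∃ s g : F[X], s ∈ SF σ (n - 2 * k) ∧ g ∈ SC σ k ∧ φ = s * g ^ 2 := by
  obtain ⟨hm, hdeg, h0, hcj⟩ := hφ
  obtain ⟨s, g, sm, gm, ssf, hrec⟩ := decomp_exists_aux φ.natDegree φ le_rfl hm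
  have hprod : s.coeff 0 * (g.coeff 0 * g.coeff 0) ≠ 0 := by
    rw [← Polynomial.mul_coeff_zero, ← Polynomial.mul_coeff_zero, ← pow_two, ← hrec]
    exact h0
  have s0 : s.coeff 0 ≠ 0 := fun h => hprod (by rw [h, zero_mul])
  have g0 : g.coeff 0 ≠ 0 := fun h => hprod (by rw [h, zero_mul, mul_zero])
  have heq : s * g ^ 2 = conj σ s * (conj σ g) ^ 2 := by
    have h1 : conj σ φ = conj σ s * (conj σ g) ^ 2 := by
      rw [hrec, pow_two, conj_mul, conj_mul, ← pow_two]
    rw [← h1, hcj, hrec]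
  obtain ⟨hscj, hgcj⟩ := decomp_unique sm (conj_monic sm.ne_zero s0) gm
    (conj_monic gm.ne_zero g0) ssf (conj_squarefree s0 ssf) heq
  have hdeg2 : n = s.natDegree + (g.natDegree + g.natDegree) := by
    rw [← hdeg, hrec, pow_two, sm.natDegree_mul (gm.mul gm), gm.natDegree_mul gm]
  refine ⟨g.natDegree, by omega, s, g, ⟨sm, ssf, by omega, s0, hscj.symm⟩,
    ⟨gm, rfl, g0, hgcj.symm⟩, hrec⟩

lemma convolution (σ : F →+* F) (n : ℕ) :
    Nat.card (SC σ n : Set F[X]) = ∑ k ∈ Finset.range (n / 2 + 1),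
      Nat.card (SF σ (n - 2 * k) : Set F[X]) * Nat.card (SC σ k : Set F[X]) := by
  classical
  haveI fSF : ∀ m : ℕ, Fintype (SF σ m : Set F[X]) := fun m => (finite_SF σ m).fintype
  haveI fSC : ∀ m : ℕ, Fintype (SC σ m : Set F[X]) := fun m => (finite_SC σ m).fintype
  set f : (Σ k : Fin (n / 2 + 1), (SF σ (n - 2 * k.1) : Set F[X]) × (SC σ k.1 : Set F[X]))
      → (SC σ n : Set F[X]) :=
    fun t => ⟨t.2.1.1 * t.2.2.1 ^ 2, mul_sq_mem (by have := t.1.2; omega) t.2.1.2 t.2.2.2⟩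
    with hfdef
  have hbij : Function.Bijective f := by
    constructor
    · rintro ⟨⟨k₁, hk₁⟩, ⟨s₁, hs₁⟩, ⟨g₁, hg₁⟩⟩ ⟨⟨k₂, hk₂⟩, ⟨s₂, hs₂⟩, ⟨g₂, hg₂⟩⟩ hab
      have hab' : s₁ * g₁ ^ 2 = s₂ * g₂ ^ 2 := congrArg Subtype.val hab
      obtain ⟨hseq, hgeq⟩ := decomp_unique hs₁.1 hs₂.1 hg₁.1 hg₂.1 hs₁.2.1 hs₂.2.1 hab'
      have hkeq : k₁ = k₂ := by
        have e1 : g₁.natDegree = k₁ := hg₁.2.1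
        have e2 : g₂.natDegree = k₂ := hg₂.2.1
        rw [← e1, ← e2, hgeq]
      subst hkeq
      subst hseq
      subst hgeq
      rfl
    · rintro ⟨φ, hφ⟩
      obtain ⟨k, hk, s, g, hs, hg, hrec⟩ := decomp_of_SC hφ
      exact ⟨⟨⟨k, by omega⟩, ⟨s, hs⟩, ⟨g, hg⟩⟩, Subtype.ext hrec.symm⟩
  rw [← Nat.card_congr (Equiv.ofBijective f hbij)]
  rw [Nat.card_eq_fintype_card, Fintype.card_sigma]
  rw [← Fin.sum_univ_eq_sum_range (fun k =>
    Nat.card (SF σ (n - 2 * k) : Set F[X]) * Nat.card (SC σ k : Set F[X]))]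
  congr 1
  funext k
  rw [Fintype.card_prod, Nat.card_eq_fintype_card, Nat.card_eq_fintype_card]

end convolution

section bases

variable {σ : F →+* F}

lemma SC_zero (σ : F →+* F) : SC σ 0 = ({1} : Set F[X]) := by
  ext p
  constructor
  · rintro ⟨hm, hd, -, -⟩
    exact hm.natDegree_eq_zero.mp hd
  · rintro rfl
    refine ⟨monic_one, Polynomial.natDegree_one, ?_, conj_one⟩
    rw [Polynomial.coeff_one_zero]
    exact one_ne_zero

lemma SF_zero (σ : F →+* F) : SF σ 0 = ({1} : Set F[X]) := by
  ext p
  constructor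
  · rintro ⟨hm, -, hd, -, -⟩
    exact hm.natDegree_eq_zero.mp hd
  · rintro rfl
    refine ⟨monic_one, squarefree_one, Polynomial.natDegree_one, ?_, conj_one⟩
    rw [Polynomial.coeff_one_zero]
    exact one_ne_zero

lemma SF_one (σ : F →+* F) : SF σ 1 = SC σ 1 := by
  ext p
  constructor
  · rintro ⟨hm, -, hd, h0, hc⟩
    exact ⟨hm, hd, h0, hc⟩
  · rintro ⟨hm, hd, h0, hc⟩
    have hdeg : p.degree = 1 := by
      rw [Polynomial.degree_eq_natDegree hm.ne_zero, hd]
      rfl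
    exact ⟨hm, (Polynomial.prime_of_degree_eq_one hdeg).irreducible.squarefree, hd, h0, hc⟩

lemma card_singleton_one : Nat.card (({1} : Set F[X]) : Set F[X]) = 1 := by
  have h := Nat.card_coe_set_eq ({1} : Set F[X])
  rw [Set.ncard_singleton] at h
  exact h

end bases

section recurrence

variable {σ : F →+* F} {q : ℕ}

lemma REC (hq : Fintype.card F = q ^ 2) (hσ : ∀ x : F, σ x = x ^ q) (m : ℕ) :
    Nat.card (SC σ (m + 3) : Set F[X]) = q * Nat.card (SC σ (m + 1) : Set F[X])
      + Nat.card (SF σ (m + 1) : Set F[X]) + Nat.card (SF σ (m + 3) : Set F[X]) := by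
  set A : ℕ → ℕ := fun j => Nat.card (SF σ j : Set F[X]) with hA
  set M : ℕ → ℕ := fun j => Nat.card (SC σ j : Set F[X]) with hM
  have hM0 : M 0 = 1 := by rw [hM]; simp only; rw [SC_zero σ]; exact card_singleton_one
  have hMj : ∀ j, M (j + 1) = (q + 1) * q ^ j := fun j => card_SC hq hσ j
  set K := (m + 1) / 2 with hK
  have h3 := convolution σ (m + 3)
  have h1 := convolution σ (m + 1)
  have hK3 : (m + 3) / 2 + 1 = K + 1 + 1 := by omega
  have hK1 : (m + 1) / 2 + 1 = K + 1 := by omega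
  rw [hK3, Finset.sum_range_succ', Finset.sum_range_succ'] at h3
  rw [hK1, Finset.sum_range_succ'] at h1
  -- h3 : M (m+3) = (∑ k in range K, f ((k+1)+1)) + f (0+1) + f 0 with f k = A (m+3-2k) * M k
  set T := ∑ k ∈ Finset.range K, A (m + 1 - 2 * (k + 1)) * M (k + 1) with hT
  have hsum : (∑ k ∈ Finset.range K, A (m + 3 - 2 * (k + 1 + 1)) * M (k + 1 + 1)) = q * T := by
    rw [hT, Finset.mul_sum]
    apply Finset.sum_congr rfl
    intro k hk
    have e1 : m + 3 - 2 * (k + 1 + 1) = m + 1 - 2 * (k + 1) := by omega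
    have e2 : M (k + 1 + 1) = q * M (k + 1) := by
      rw [hMj (k + 1), hMj k, pow_succ]
      ring
    rw [e1, e2]
    ring
  rw [hsum] at h3
  have e3 : m + 3 - 2 * (0 + 1) = m + 1 := by omega
  have e4 : m + 3 - 2 * 0 = m + 3 := by omega
  have e5 : m + 1 - 2 * 0 = m + 1 := by omega
  rw [e3, e4] at h3
  rw [e5] at h1
  -- h1 : M (m+1) = T + A (m+1) * M 0
  have hM0' : Nat.card (SC σ 0 : Set F[X]) = 1 := by
    rw [SC_zero σ]
    exact card_singleton_one
  have hM1' : Nat.card (SC σ (0 + 1) : Set F[X]) = q + 1 := by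
    rw [card_SC hq hσ 0, pow_zero, mul_one]
  rw [h3, h1, hM0', hM1', mul_one]
  ring

end recurrence

end RSSU

theorem regular_semisimple_classes_U (q n : ℕ) (hn : 1 ≤ n)
    (F : Type*) [Field F] [Fintype F] (hq : Fintype.card F = q ^ 2)
    (σ : F →+* F) (hσ : ∀ x : F, σ x = x ^ q) :
    ({p : Polynomial F | p.Monic ∧ Squarefree p ∧ p.natDegree = n ∧ p.coeff 0 ≠ 0 ∧
        Polynomial.C (σ (p.coeff 0))⁻¹ * (p.reverse.map σ) = p}.ncard : ℤ)
      * ((q : ℤ) ^ 2 + 1)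
      = ((q : ℤ) + 1) * ((q : ℤ) ^ (n + 1) - (q : ℤ) ^ n
          + (-1) ^ (n + 1) * (-1) ^ (n / 2) * ((q : ℤ) - (-1) ^ n)) := by
  classical
  have hset : {p : Polynomial F | p.Monic ∧ Squarefree p ∧ p.natDegree = n ∧ p.coeff 0 ≠ 0 ∧
      Polynomial.C (σ (p.coeff 0))⁻¹ * (p.reverse.map σ) = p} = RSSU.SF σ n := rfl
  rw [hset]
  suffices H : ∀ m : ℕ, ((Nat.card (RSSU.SF σ (m + 1) : Set (Polynomial F)) : ℤ))
      * ((q : ℤ) ^ 2 + 1)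
      = ((q : ℤ) + 1) * ((q : ℤ) ^ (m + 1 + 1) - (q : ℤ) ^ (m + 1)
          + (-1) ^ (m + 1 + 1) * (-1) ^ ((m + 1) / 2) * ((q : ℤ) - (-1) ^ (m + 1))) by
    obtain ⟨m, rfl⟩ : ∃ m, n = m + 1 := ⟨n - 1, by omega⟩
    rw [← Nat.card_coe_set_eq]
    exact H m
  intro m
  induction m using Nat.twoStepInduction with
  | zero =>
    have hA1 : Nat.card (RSSU.SF σ 1 : Set (Polynomial F)) = q + 1 := by
      rw [RSSU.SF_one σ, RSSU.card_SC hq hσ 0, pow_zero, mul_one]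
    rw [hA1]
    push_cast
    ring
  | one =>
    have h2 := RSSU.convolution σ 2
    rw [show 2 / 2 + 1 = 2 from rfl, Finset.sum_range_succ, Finset.sum_range_succ,
      Finset.sum_range_zero] at h2
    norm_num at h2
    simp only [← Nat.card_coe_set_eq] at h2
    have hA0 : Nat.card (RSSU.SF σ 0 : Set (Polynomial F)) = 1 := by
      rw [RSSU.SF_zero σ]
      exact RSSU.card_singleton_one
    have hM0 : Nat.card (RSSU.SC σ 0 : Set (Polynomial F)) = 1 := by
      rw [RSSU.SC_zero σ]
      exact RSSU.card_singleton_one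
    have hM1 : Nat.card (RSSU.SC σ 1 : Set (Polynomial F)) = q + 1 := by
      rw [show (1 : ℕ) = 0 + 1 from rfl, RSSU.card_SC hq hσ 0, pow_zero, mul_one]
    have hM2 : Nat.card (RSSU.SC σ 2 : Set (Polynomial F)) = (q + 1) * q := by
      rw [show (2 : ℕ) = 1 + 1 from rfl, RSSU.card_SC hq hσ 1, pow_one]
    rw [hA0, hM0, hM1, hM2] at h2
    have h2z : ((q : ℤ) + 1) * q
        = (Nat.card (RSSU.SF σ 2 : Set (Polynomial F)) : ℤ) * 1 + 1 * ((q : ℤ) + 1) := by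
      exact_mod_cast congrArg (Nat.cast : ℕ → ℤ) h2
    have hA2 : ((Nat.card (RSSU.SF σ 2 : Set (Polynomial F)) : ℤ))
        = ((q : ℤ) + 1) * q - ((q : ℤ) + 1) := by linarith
    rw [show (1 : ℕ) + 1 = 2 from rfl, hA2]
    ring
  | more m ih _ =>
    have hrec := RSSU.REC hq hσ m
    have hM3 : Nat.card (RSSU.SC σ (m + 3) : Set (Polynomial F)) = (q + 1) * q ^ (m + 2) := by
      rw [show m + 3 = (m + 2) + 1 by omega]
      exact RSSU.card_SC hq hσ (m + 2)
    have hM1 : Nat.card (RSSU.SC σ (m + 1) : Set (Polynomial F)) = (q + 1) * q ^ m :=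
      RSSU.card_SC hq hσ m
    rw [hM3, hM1] at hrec
    have hrecz : ((q : ℤ) + 1) * (q : ℤ) ^ (m + 2)
        = (q : ℤ) * (((q : ℤ) + 1) * (q : ℤ) ^ m)
          + (Nat.card (RSSU.SF σ (m + 1) : Set (Polynomial F)) : ℤ)
          + (Nat.card (RSSU.SF σ (m + 3) : Set (Polynomial F)) : ℤ) := by
      exact_mod_cast congrArg (Nat.cast : ℕ → ℤ) hrec
    have hidx : m + 2 + 1 = m + 3 := by omega
    rw [hidx]
    have hdiv : (m + 2 + 1) / 2 = (m + 1) / 2 + 1 := by omega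
    rw [show (m + 3) / 2 = (m + 1) / 2 + 1 by omega]
    rw [show m + 3 + 1 = m + 4 by omega]
    linear_combination (-(q : ℤ) ^ 2 - 1) * hrecz - ih
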